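/- Let q be a nonzero integer, d ≥ 1, and let c_0, …, c_{d−1}, e_1, …, e_d be integers with e_d ∈ {1, −1}. Set h = F^d + Σ_{i=0}^{d−1} c_i F^i + Σ_{j=1}^{d} e_j V^j ∈ ℤ[F,V] and P(X) = X^{2d} + Σ_{i=0}^{d−1} c_i X^{d+i} + Σ_{j=1}^{d} e_j q^j X^{d−j} ∈ ℤ[X]. Then for every prime ℓ not dividing q there is an isomorphism of ℤ_ℓ-algebras ℤ_ℓ ⊗_ℤ ( ℤ[F,V]/(FV − q, h) ) ≅ ℤ_ℓ[X]/(P) sending 1 ⊗ F to the residue class of X (under which the image of X is invertible and 1 ⊗ V corresponds to q·X⁻¹). -/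

import Mathlib

open MvPolynomial in
/-- The variable `F` in `ℤ[F, V]`. -/
noncomputable def Fvar : MvPolynomial (Fin 2) ℤ := X 0

open MvPolynomial in
/-- The variable `V` in `ℤ[F, V]`. -/
noncomputable def Vvar : MvPolynomial (Fin 2) ℤ := X 1

open MvPolynomial in
/-- The polynomial `h = F^d + Σ_{i=0}^{d-1} c_i F^i + Σ_{j=1}^{d} e_j V^j ∈ ℤ[F, V]`. -/
noncomputable def hPoly (d : ℕ) (c e : ℕ → ℤ) : MvPolynomial (Fin 2) ℤ :=
  Fvar ^ d + (∑ i ∈ Finset.range d, C (c i) * Fvar ^ i) +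
    ∑ j ∈ Finset.Icc 1 d, C (e j) * Vvar ^ j

/-- The ring `ℤ[F,V]/(FV - q, h)` modelling the minimal central order `R_w`. -/
noncomputable abbrev Rw (q : ℤ) (d : ℕ) (c e : ℕ → ℤ) : Type :=
  MvPolynomial (Fin 2) ℤ ⧸
    Ideal.span {Fvar * Vvar - MvPolynomial.C q, hPoly d c e}

/-- The polynomial `P(X) = X^{2d} + Σ_{i=0}^{d-1} c_i X^{d+i} + Σ_{j=1}^{d} e_j q^j X^{d-j}`
with coefficients in `ℤ_ℓ`. -/
noncomputable def Pw (q : ℤ) (d : ℕ) (c e : ℕ → ℤ) (ℓ : ℕ) [Fact ℓ.Prime] :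
    Polynomial ℤ_[ℓ] :=
  Polynomial.X ^ (2 * d) +
    (∑ i ∈ Finset.range d, Polynomial.C ((c i : ℤ_[ℓ])) * Polynomial.X ^ (d + i)) +
    ∑ j ∈ Finset.Icc 1 d, Polynomial.C (((e j * q ^ j : ℤ) : ℤ_[ℓ])) * Polynomial.X ^ (d - j)

section Aux
variable (q : ℤ) (d : ℕ) (c e : ℕ → ℤ) (ℓ : ℕ) [Fact ℓ.Prime]

/-- The ideal defining `Rw`. -/
noncomputable abbrev Iw : Ideal (MvPolynomial (Fin 2) ℤ) :=
  Ideal.span {Fvar * Vvar - MvPolynomial.C q, hPoly d c e}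

noncomputable abbrev Jw : Ideal (Polynomial ℤ_[ℓ]) := Ideal.span {Pw q d c e ℓ}

lemma isUnit_q_padic (hℓ : ¬ ((ℓ : ℤ) ∣ q)) : IsUnit ((q : ℤ_[ℓ])) := by
  rw [PadicInt.isUnit_iff]
  refine le_antisymm (PadicInt.norm_le_one _) ?_
  by_contra hlt
  push_neg at hlt
  exact hℓ ((PadicInt.norm_int_lt_one_iff_dvd q).mp hlt)

lemma Pw_coeff_zero (hd : 1 ≤ d) :
    (Pw q d c e ℓ).coeff 0 = ((e d * q ^ d : ℤ) : ℤ_[ℓ]) := by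
  unfold Pw
  rw [Polynomial.coeff_add, Polynomial.coeff_add, Polynomial.coeff_X_pow,
    Polynomial.finset_sum_coeff, Polynomial.finset_sum_coeff, if_neg (by omega),
    Finset.sum_eq_zero (fun i hi => by
      rw [Polynomial.coeff_C_mul, Polynomial.coeff_X_pow, if_neg (by omega), mul_zero]),
    Finset.sum_eq_single d
      (fun j hj hne => by
        have hj' := Finset.mem_Icc.mp hj
        rw [Polynomial.coeff_C_mul, Polynomial.coeff_X_pow, if_neg (by omega), mul_zero])
      (fun hd' => absurd (Finset.mem_Icc.mpr ⟨hd, le_rfl⟩) hd'),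
    Nat.sub_self, pow_zero, mul_one, Polynomial.coeff_C_zero, zero_add, zero_add]


open MvPolynomial in
lemma hPoly_mem : hPoly d c e ∈ Iw q d c e :=
  Ideal.subset_span (by simp)

open MvPolynomial in
lemma FV_mem : Fvar * Vvar - C q ∈ Iw q d c e :=
  Ideal.subset_span (by simp)

open MvPolynomial in
lemma G_mem :
    (Fvar ^ (2 * d) + (∑ i ∈ Finset.range d, C (c i) * Fvar ^ (d + i)) +
      ∑ j ∈ Finset.Icc 1 d, C (e j * q ^ j) * Fvar ^ (d - j)) ∈ Iw q d c e := by
  have key : ∀ j ∈ Finset.Icc 1 d,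
      C (e j * q ^ j) * Fvar ^ (d - j) - C (e j) * (Fvar ^ d * Vvar ^ j)
        ∈ Iw q d c e := by
    intro j hj
    obtain ⟨hj1, hj2⟩ := Finset.mem_Icc.mp hj
    obtain ⟨g, hg⟩ := sub_dvd_pow_sub_pow (Fvar * Vvar) (C q : MvPolynomial (Fin 2) ℤ) j
    have hFd : Fvar ^ d * Vvar ^ j = Fvar ^ (d - j) * (Fvar * Vvar) ^ j := by
      rw [mul_pow, ← mul_assoc, ← pow_add, Nat.sub_add_cancel hj2]
    have heq : C (e j * q ^ j) * Fvar ^ (d - j) - C (e j) * (Fvar ^ d * Vvar ^ j)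
        = (-(C (e j) * Fvar ^ (d - j) * g)) * (Fvar * Vvar - C q) := by
      rw [hFd, map_mul, map_pow]
      linear_combination (-(C (e j) : MvPolynomial (Fin 2) ℤ) * Fvar ^ (d - j)) * hg
    rw [heq]
    exact Ideal.mul_mem_left _ _ (FV_mem q d c e)
  have h1 : Fvar ^ d * hPoly d c e
      = Fvar ^ (2 * d) + (∑ i ∈ Finset.range d, C (c i) * Fvar ^ (d + i))
        + ∑ j ∈ Finset.Icc 1 d, C (e j) * (Fvar ^ d * Vvar ^ j) := by
    unfold hPoly
    rw [mul_add, mul_add, Finset.mul_sum, Finset.mul_sum]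
    congr 1
    · congr 1
      · rw [← pow_add, two_mul]
      · exact Finset.sum_congr rfl fun i _ => by rw [pow_add]; ring
    · exact Finset.sum_congr rfl fun j _ => by ring
  have h2 : (∑ j ∈ Finset.Icc 1 d, C (e j * q ^ j) * Fvar ^ (d - j))
      = (∑ j ∈ Finset.Icc 1 d, C (e j) * (Fvar ^ d * Vvar ^ j))
        + ∑ j ∈ Finset.Icc 1 d,
            (C (e j * q ^ j) * Fvar ^ (d - j) - C (e j) * (Fvar ^ d * Vvar ^ j)) := by
    rw [← Finset.sum_add_distrib]
    exact Finset.sum_congr rfl fun j _ => by ring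
  have hdecomp : Fvar ^ (2 * d) + (∑ i ∈ Finset.range d, C (c i) * Fvar ^ (d + i)) +
      ∑ j ∈ Finset.Icc 1 d, C (e j * q ^ j) * Fvar ^ (d - j)
      = Fvar ^ d * hPoly d c e + ∑ j ∈ Finset.Icc 1 d,
          (C (e j * q ^ j) * Fvar ^ (d - j) - C (e j) * (Fvar ^ d * Vvar ^ j)) := by
    rw [h2, h1]; ring
  rw [hdecomp]
  exact Ideal.add_mem _ (Ideal.mul_mem_left _ _ (hPoly_mem q d c e))
    (Ideal.sum_mem _ key)


open scoped TensorProduct in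
lemma one_tmul_C_mul (n : ℤ) (m : MvPolynomial (Fin 2) ℤ) :
    ((n : ℤ_[ℓ]) ⊗ₜ[ℤ] (Ideal.Quotient.mk (Iw q d c e) m) : ℤ_[ℓ] ⊗[ℤ] Rw q d c e)
      = (1 : ℤ_[ℓ]) ⊗ₜ[ℤ] (Ideal.Quotient.mk (Iw q d c e) (MvPolynomial.C n * m)) := by
  have h1 : ((n : ℤ_[ℓ])) = n • (1 : ℤ_[ℓ]) := by simp
  have h2 : MvPolynomial.C n * m = n • m := by
    rw [zsmul_eq_mul, eq_intCast (MvPolynomial.C : ℤ →+* MvPolynomial (Fin 2) ℤ) n]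
  rw [h1, h2, map_zsmul, TensorProduct.smul_tmul]

set_option synthInstance.maxHeartbeats 1000000 in
set_option maxHeartbeats 2000000 in
open scoped TensorProduct in
lemma aeval_tmulF_Pw :
    Polynomial.aeval
        ((1 : ℤ_[ℓ]) ⊗ₜ[ℤ] (Ideal.Quotient.mk (Iw q d c e) Fvar) : ℤ_[ℓ] ⊗[ℤ] Rw q d c e)
      (Pw q d c e ℓ) = 0 := by
  letI : CommRing (ℤ_[ℓ] ⊗[ℤ] Rw q d c e) := Algebra.TensorProduct.instCommRing
  set t : ℤ_[ℓ] ⊗[ℤ] Rw q d c e :=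
    (1 : ℤ_[ℓ]) ⊗ₜ[ℤ] (Ideal.Quotient.mk (Iw q d c e) Fvar) with ht
  have htpow : ∀ k : ℕ,
      t ^ k = (1 : ℤ_[ℓ]) ⊗ₜ[ℤ] (Ideal.Quotient.mk (Iw q d c e) (Fvar ^ k)) := by
    intro k; rw [ht, Algebra.TensorProduct.tmul_pow, one_pow, map_pow]
  have hterm : ∀ (n : ℤ) (k : ℕ),
      algebraMap ℤ_[ℓ] (ℤ_[ℓ] ⊗[ℤ] Rw q d c e) ((n : ℤ_[ℓ])) * t ^ k
        = (1 : ℤ_[ℓ]) ⊗ₜ[ℤ]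
            (Ideal.Quotient.mk (Iw q d c e) (MvPolynomial.C n * Fvar ^ k)) := by
    intro n k
    rw [Algebra.TensorProduct.algebraMap_apply, htpow,
      Algebra.TensorProduct.tmul_mul_tmul, one_mul, mul_one]
    exact one_tmul_C_mul q d c e ℓ n (Fvar ^ k)
  unfold Pw
  simp only [map_add, map_pow, map_sum, map_mul, Polynomial.aeval_X, Polynomial.aeval_C]
  rw [htpow (2 * d),
    Finset.sum_congr rfl (fun i _ => hterm (c i) (d + i)),
    Finset.sum_congr rfl (fun j _ => hterm (e j * q ^ j) (d - j))]
  simp only [← TensorProduct.tmul_sum, ← TensorProduct.tmul_add, ← map_sum, ← map_add]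
  rw [Ideal.Quotient.eq_zero_iff_mem.mpr (G_mem q d c e), TensorProduct.tmul_zero]


open Polynomial in
lemma exists_X_inv (hd : 1 ≤ d) (hed : e d = 1 ∨ e d = -1) (hℓ : ¬ ((ℓ : ℤ) ∣ q)) :
    ∃ y : Polynomial ℤ_[ℓ] ⧸ Jw q d c e ℓ,
      Ideal.Quotient.mk (Jw q d c e ℓ) Polynomial.X * y = 1 := by
  obtain ⟨Q, hQ⟩ := Polynomial.X_dvd_sub_C (p := Pw q d c e ℓ)
  rw [Pw_coeff_zero q d c e ℓ hd] at hQ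
  have hu : IsUnit ((e d * q ^ d : ℤ) : ℤ_[ℓ]) := by
    push_cast
    refine IsUnit.mul ?_ ((isUnit_q_padic q ℓ hℓ).pow d)
    rcases hed with h | h <;> simp [h]
  set u := hu.unit with hu_def
  have hP0 : Ideal.Quotient.mk (Jw q d c e ℓ) (Pw q d c e ℓ) = 0 :=
    Ideal.Quotient.eq_zero_iff_mem.mpr (Ideal.mem_span_singleton_self _)
  refine ⟨Ideal.Quotient.mk _ (Polynomial.C (-(↑u⁻¹ : ℤ_[ℓ])) * Q), ?_⟩
  have key : Polynomial.X * (Polynomial.C (-(↑u⁻¹ : ℤ_[ℓ])) * Q)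
      = Polynomial.C (-(↑u⁻¹ : ℤ_[ℓ])) * (Pw q d c e ℓ)
        + Polynomial.C ((↑u⁻¹ : ℤ_[ℓ]) * ((e d * q ^ d : ℤ) : ℤ_[ℓ])) := by
    simp only [map_neg, map_mul]
    linear_combination (Polynomial.C (↑u⁻¹ : ℤ_[ℓ])) * hQ
  have hinv : (↑u⁻¹ : ℤ_[ℓ]) * ((e d * q ^ d : ℤ) : ℤ_[ℓ]) = 1 := by
    rw [← hu.unit_spec, Units.inv_mul]
  rw [← map_mul, key, map_add, map_mul, hP0, mul_zero, zero_add, hinv, map_one, map_one]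

end Aux

set_option maxHeartbeats 2000000 in
set_option synthInstance.maxHeartbeats 1000000 in
open scoped TensorProduct in
/-- For every prime `ℓ` not dividing `q` there is an isomorphism of `ℤ_ℓ`-algebras
`ℤ_ℓ ⊗_ℤ (ℤ[F,V]/(FV - q, h)) ≅ ℤ_ℓ[X]/(P)` sending `1 ⊗ F` to the class of `X`
(under which the image of `X` is invertible and `1 ⊗ V` corresponds to `q·X⁻¹`). -/
theorem stmt_6 (q : ℤ) (hq : q ≠ 0) (d : ℕ) (hd : 1 ≤ d) (c e : ℕ → ℤ)
    (hed : e d = 1 ∨ e d = -1) (ℓ : ℕ) [Fact ℓ.Prime] (hℓ : ¬ ((ℓ : ℤ) ∣ q)) :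
    ∃ φ : (ℤ_[ℓ] ⊗[ℤ] Rw q d c e) ≃ₐ[ℤ_[ℓ]]
        (Polynomial ℤ_[ℓ] ⧸ Ideal.span {Pw q d c e ℓ}),
      φ ((1 : ℤ_[ℓ]) ⊗ₜ[ℤ]
            (Ideal.Quotient.mk (Ideal.span {Fvar * Vvar - MvPolynomial.C q, hPoly d c e}) Fvar)) =
          Ideal.Quotient.mk (Ideal.span {Pw q d c e ℓ}) Polynomial.X ∧
      IsUnit (Ideal.Quotient.mk (Ideal.span {Pw q d c e ℓ}) Polynomial.X) ∧
      φ ((1 : ℤ_[ℓ]) ⊗ₜ[ℤ]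
            (Ideal.Quotient.mk (Ideal.span {Fvar * Vvar - MvPolynomial.C q, hPoly d c e}) Vvar)) *
          Ideal.Quotient.mk (Ideal.span {Pw q d c e ℓ}) Polynomial.X =
        (q : Polynomial ℤ_[ℓ] ⧸ Ideal.span {Pw q d c e ℓ}) := by
  classical
  letI : CommRing (ℤ_[ℓ] ⊗[ℤ] Rw q d c e) := Algebra.TensorProduct.instCommRing
  obtain ⟨y, hxy⟩ := exists_X_inv q d c e ℓ hd hed hℓ
  set x' : Polynomial ℤ_[ℓ] ⧸ Jw q d c e ℓ := Ideal.Quotient.mk (Jw q d c e ℓ) Polynomial.X with hx'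
  have hxu : IsUnit x' := IsUnit.of_mul_eq_one y hxy
  set v' : Polynomial ℤ_[ℓ] ⧸ Jw q d c e ℓ := (q : Polynomial ℤ_[ℓ] ⧸ Jw q d c e ℓ) * y with hv'
  have hpow : ∀ j ≤ d, x' ^ d * y ^ j = x' ^ (d - j) := by
    intro j hj
    have h1 : x' ^ d = x' ^ (d - j) * x' ^ j := by rw [← pow_add, Nat.sub_add_cancel hj]
    rw [h1, mul_assoc, ← mul_pow, hxy, one_pow, mul_one]
  set ψ : MvPolynomial (Fin 2) ℤ →ₐ[ℤ] (Polynomial ℤ_[ℓ] ⧸ Jw q d c e ℓ) := MvPolynomial.aeval ![x', v'] with hψ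
  have hψF : ψ Fvar = x' := by
    rw [hψ, Fvar, MvPolynomial.aeval_X]
    simp
  have hψV : ψ Vvar = v' := by
    rw [hψ, Vvar, MvPolynomial.aeval_X]
    simp
  have hψFV : ψ (Fvar * Vvar - MvPolynomial.C q) = 0 := by
    rw [map_sub, map_mul, hψF, hψV, MvPolynomial.aeval_C, eq_intCast, hv',
      show x' * ((q : Polynomial ℤ_[ℓ] ⧸ Jw q d c e ℓ) * y) = (q : Polynomial ℤ_[ℓ] ⧸ Jw q d c e ℓ) * (x' * y) by ring, hxy, mul_one, sub_self]
  have hψh : ψ (hPoly d c e) = 0 := by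
    have hsuf : x' ^ d * ψ (hPoly d c e) = Ideal.Quotient.mk (Jw q d c e ℓ) (Pw q d c e ℓ) := by
      have hv : ∀ j ∈ Finset.Icc 1 d, x' ^ d * v' ^ j = (q : Polynomial ℤ_[ℓ] ⧸ Jw q d c e ℓ) ^ j * x' ^ (d - j) := by
        intro j hj
        obtain ⟨-, hj2⟩ := Finset.mem_Icc.mp hj
        rw [hv', mul_pow, show x' ^ d * ((q : Polynomial ℤ_[ℓ] ⧸ Jw q d c e ℓ) ^ j * y ^ j)
          = (q : Polynomial ℤ_[ℓ] ⧸ Jw q d c e ℓ) ^ j * (x' ^ d * y ^ j) by ring, hpow j hj2]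
      unfold hPoly Pw
      simp only [map_add, map_sum, map_mul, map_pow, hψF, hψV, MvPolynomial.aeval_C,
        eq_intCast, Int.cast_mul, Int.cast_pow, map_intCast]
      rw [mul_add, mul_add, Finset.mul_sum, Finset.mul_sum]
      congr 1
      · congr 1
        · rw [← pow_add, two_mul]
        · exact Finset.sum_congr rfl fun i _ => by rw [pow_add]; ring
      · refine Finset.sum_congr rfl fun j hj => ?_
        rw [show x' ^ d * ((e j : Polynomial ℤ_[ℓ] ⧸ Jw q d c e ℓ) * v' ^ j) = (e j : Polynomial ℤ_[ℓ] ⧸ Jw q d c e ℓ) * (x' ^ d * v' ^ j) by ring,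
          hv j hj]
        ring
    have hP0 : Ideal.Quotient.mk (Jw q d c e ℓ) (Pw q d c e ℓ) = 0 :=
      Ideal.Quotient.eq_zero_iff_mem.mpr (Ideal.mem_span_singleton_self _)
    exact ((hxu.pow d).mul_right_eq_zero).mp (by rw [hsuf, hP0])
  have h0 : Iw q d c e ≤ RingHom.ker ψ.toRingHom := by
    rw [Ideal.span_le]
    intro a ha
    rcases Set.mem_insert_iff.mp ha with rfl | ha'
    · exact hψFV
    · rw [Set.mem_singleton_iff.mp ha']
      exact hψh
  set g : Rw q d c e →ₐ[ℤ] (Polynomial ℤ_[ℓ] ⧸ Jw q d c e ℓ) :=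
    Ideal.Quotient.liftₐ (Iw q d c e) ψ (fun a ha => (RingHom.mem_ker (f := ψ.toRingHom)).mp (h0 ha)) with hg
  have hg_mk : ∀ m, g (Ideal.Quotient.mk (Iw q d c e) m) = ψ m := fun m => by
    rw [hg, Ideal.Quotient.liftₐ_apply]; rfl
  set β : (ℤ_[ℓ] ⊗[ℤ] Rw q d c e) →ₐ[ℤ_[ℓ]] (Polynomial ℤ_[ℓ] ⧸ Jw q d c e ℓ) :=
    Algebra.TensorProduct.lift (Algebra.ofId ℤ_[ℓ] (Polynomial ℤ_[ℓ] ⧸ Jw q d c e ℓ)) g (fun _ _ => Commute.all _ _) with hβ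
  have hβ_tmul : ∀ m, β ((1 : ℤ_[ℓ]) ⊗ₜ[ℤ] Ideal.Quotient.mk (Iw q d c e) m)
      = ψ m := fun m => by
    rw [hβ, Algebra.TensorProduct.lift_tmul, map_one, one_mul, hg_mk]
  set t : ℤ_[ℓ] ⊗[ℤ] Rw q d c e := (1 : ℤ_[ℓ]) ⊗ₜ[ℤ] (Ideal.Quotient.mk (Iw q d c e) Fvar) with ht
  set α : (Polynomial ℤ_[ℓ] ⧸ Jw q d c e ℓ) →ₐ[ℤ_[ℓ]] (ℤ_[ℓ] ⊗[ℤ] Rw q d c e) :=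
    Ideal.Quotient.liftₐ (Jw q d c e ℓ) (Polynomial.aeval t) (by
      intro a ha
      obtain ⟨g', rfl⟩ := Ideal.mem_span_singleton.mp ha
      rw [map_mul, ht, aeval_tmulF_Pw, zero_mul]) with hα
  have hα_mk : ∀ p, α (Ideal.Quotient.mk (Jw q d c e ℓ) p) = Polynomial.aeval t p := fun p => by
    rw [hα, Ideal.Quotient.liftₐ_apply]; rfl
  have hαx : α x' = t := by rw [hx', hα_mk, Polynomial.aeval_X]
  have h1 : β.comp α = AlgHom.id ℤ_[ℓ] (Polynomial ℤ_[ℓ] ⧸ Jw q d c e ℓ) := by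
    refine Ideal.Quotient.algHom_ext ℤ_[ℓ] (Polynomial.algHom_ext ?_)
    show β (α (Ideal.Quotient.mk (Jw q d c e ℓ) Polynomial.X)) = _
    rw [← hx', hαx, ht, hβ_tmul, hψF, hx']
    rfl
  have h2 : α.comp β = AlgHom.id ℤ_[ℓ] (ℤ_[ℓ] ⊗[ℤ] Rw q d c e) := by
    refine Algebra.TensorProduct.ext ?_ ?_
    · exact AlgHom.ext fun r => by
        have ha := ((α.comp β).comp Algebra.TensorProduct.includeLeft).commutes r
        have hb := ((AlgHom.id ℤ_[ℓ] (ℤ_[ℓ] ⊗[ℤ] Rw q d c e)).comp Algebra.TensorProduct.includeLeft).commutes r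
        simpa using ha.trans hb.symm
    · refine Ideal.Quotient.algHom_ext ℤ (MvPolynomial.algHom_ext fun i => ?_)
      fin_cases i
      · show α (β ((1 : ℤ_[ℓ]) ⊗ₜ[ℤ] Ideal.Quotient.mk (Iw q d c e) (MvPolynomial.X 0)))
          = (1 : ℤ_[ℓ]) ⊗ₜ[ℤ] Ideal.Quotient.mk (Iw q d c e) (MvPolynomial.X 0)
        rw [show (MvPolynomial.X 0 : MvPolynomial (Fin 2) ℤ) = Fvar from rfl,
          hβ_tmul, hψF, hαx, ht]
      · show α (β ((1 : ℤ_[ℓ]) ⊗ₜ[ℤ] Ideal.Quotient.mk (Iw q d c e) (MvPolynomial.X 1)))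
          = (1 : ℤ_[ℓ]) ⊗ₜ[ℤ] Ideal.Quotient.mk (Iw q d c e) (MvPolynomial.X 1)
        rw [show (MvPolynomial.X 1 : MvPolynomial (Fin 2) ℤ) = Vvar from rfl, hβ_tmul, hψV]
        -- cancellation argument
        have hmkCq : Ideal.Quotient.mk (Iw q d c e) (MvPolynomial.C q)
            = ((q : Rw q d c e)) := by
          simpa using
            eq_intCast ((Ideal.Quotient.mk (Iw q d c e)).comp
              (MvPolynomial.C : ℤ →+* MvPolynomial (Fin 2) ℤ)) q
        have hq1 : ((1 : ℤ_[ℓ]) ⊗ₜ[ℤ] ((q : Rw q d c e)) : ℤ_[ℓ] ⊗[ℤ] Rw q d c e)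
            = (q : ℤ_[ℓ] ⊗[ℤ] Rw q d c e) := by
          rw [show ((q : Rw q d c e)) = (q : ℤ) • (1 : Rw q d c e) from (zsmul_one _).symm,
            TensorProduct.tmul_smul, ← Algebra.TensorProduct.one_def, zsmul_one]
        have hsv : t * ((1 : ℤ_[ℓ]) ⊗ₜ[ℤ] Ideal.Quotient.mk (Iw q d c e) Vvar)
            = (q : ℤ_[ℓ] ⊗[ℤ] Rw q d c e) := by
          rw [ht, Algebra.TensorProduct.tmul_mul_tmul, one_mul, ← map_mul,
            show Ideal.Quotient.mk (Iw q d c e) (Fvar * Vvar)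
              = Ideal.Quotient.mk (Iw q d c e) (MvPolynomial.C q) from
              Ideal.Quotient.eq.mpr (FV_mem q d c e),
            hmkCq, hq1]
        have hqT : IsUnit ((q : ℤ_[ℓ] ⊗[ℤ] Rw q d c e)) := by
          have := (isUnit_q_padic q ℓ hℓ).map (algebraMap ℤ_[ℓ] (ℤ_[ℓ] ⊗[ℤ] Rw q d c e))
          rwa [map_intCast] at this
        have htu : IsUnit t := isUnit_of_mul_isUnit_left (hsv ▸ hqT)
        refine htu.mul_left_cancel ?_
        rw [hsv, ← hαx, ← map_mul,
          show x' * v' = (q : Polynomial ℤ_[ℓ] ⧸ Jw q d c e ℓ) by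
            rw [hv', show x' * ((q : Polynomial ℤ_[ℓ] ⧸ Jw q d c e ℓ) * y) = (q : Polynomial ℤ_[ℓ] ⧸ Jw q d c e ℓ) * (x' * y) by ring, hxy, mul_one],
          map_intCast]
  refine ⟨AlgEquiv.ofAlgHom β α h1 h2, ?_, ?_, ?_⟩
  · show β ((1 : ℤ_[ℓ]) ⊗ₜ[ℤ] Ideal.Quotient.mk (Iw q d c e) Fvar) = _
    rw [hβ_tmul, hψF, hx']
  · exact hxu
  · show β ((1 : ℤ_[ℓ]) ⊗ₜ[ℤ] Ideal.Quotient.mk (Iw q d c e) Vvar)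
        * Ideal.Quotient.mk (Jw q d c e ℓ) Polynomial.X = _
    rw [hβ_tmul, hψV, ← hx', hv',
      show (q : Polynomial ℤ_[ℓ] ⧸ Jw q d c e ℓ) * y * x' = (q : Polynomial ℤ_[ℓ] ⧸ Jw q d c e ℓ) * (x' * y) by ring, hxy, mul_one]
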